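/- In the situation of a central extension 0 → A → B →π C → 1 of topological G-modules with a continuous section s of π, a continuous derivation γ : G → C satisfies [δ¹(γ)] = 0 in H²(G,A) if and only if γ lifts: there exists a continuous derivation β : G → B with π∘β = γ. Consequently the sequence H¹(G,B) → H¹(G,C) →δ¹ H²(G,A) is exact. -/

import Mathlib

def IsContDeriv {G A : Type*} [Group G] [TopologicalSpace G] [Group A] [TopologicalSpace A]
    [MulDistribMulAction G A] (α : G → A) : Prop :=
  Continuous α ∧ ∀ g h : G, α (g * h) = α g * g • α h

def Cohom {G A : Type*} [Group G] [Group A] [MulDistribMulAction G A] (α β : G → A) : Prop :=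
  ∃ a : A, ∀ g : G, β g = a⁻¹ * α g * g • a

/-- The connecting 2-cochain `δ¹(γ)(g,h) = s(γ g) * (g • s(γ h)) * s(γ (g*h))⁻¹`. -/
def delta1 {G B C : Type*} [Group G] [Group B] [Group C] [MulDistribMulAction G B]
    (s : C → B) (γ : G → C) : G → G → B :=
  fun g h => s (γ g) * g • s (γ h) * (s (γ (g * h)))⁻¹

section helpers
variable {B : Type*} [Group B]

lemma central_inv {a : B} (ha : ∀ x, a * x = x * a) : ∀ x : B, a⁻¹ * x = x * a⁻¹ := by
  have hca : ∀ x, Commute a x := fun x => ha x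
  exact fun x => ((hca x).inv_left).eq

lemma central_mul {a b : B} (ha : ∀ x, a * x = x * a) (hb : ∀ x, b * x = x * b) :
    ∀ x : B, (a * b) * x = x * (a * b) := fun x => by
  rw [mul_assoc, hb x, ← mul_assoc, ha x, mul_assoc]

lemma central_calc (a b c X Y Z : B)
    (ha : ∀ x, a * x = x * a) (hb : ∀ x, b * x = x * b) (hc : ∀ x, c * x = x * c)
    (h : X * Y * Z⁻¹ = b * c⁻¹ * a) :
    c⁻¹ * Z = a⁻¹ * X * (b⁻¹ * Y) := by
  have ha' := central_inv ha
  have hb' := central_inv hb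
  have hc' := central_inv hc
  have hZ : Z = a⁻¹ * (c * (b⁻¹ * (X * Y))) := by
    have h1 : Z⁻¹ = (X * Y)⁻¹ * (b * c⁻¹ * a) := by rw [← h]; group
    have h2 : Z = (b * c⁻¹ * a)⁻¹ * (X * Y) := by rw [← inv_inv Z, h1]; group
    rw [h2]; group
  rw [hZ, ← mul_assoc c⁻¹, hc' a⁻¹, mul_assoc a⁻¹, ← mul_assoc c⁻¹, inv_mul_cancel, one_mul,
    ← mul_assoc b⁻¹, hb' X, mul_assoc X, mul_assoc a⁻¹]

lemma central_calc2 (a b c P Q : B)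
    (ha : ∀ x, a * x = x * a) (hb : ∀ x, b * x = x * b) (hc : ∀ x, c * x = x * c) :
    (P * a) * (Q * b) * ((P * Q) * c)⁻¹ = b * c⁻¹ * a := by
  have hc' := central_inv hc
  have hba := central_mul hb ha
  calc (P * a) * (Q * b) * ((P * Q) * c)⁻¹
      = P * (a * (Q * b)) * (c⁻¹ * (Q⁻¹ * P⁻¹)) := by group
    _ = P * ((Q * b) * a) * ((Q⁻¹ * P⁻¹) * c⁻¹) := by rw [ha (Q * b), hc' (Q⁻¹ * P⁻¹)]
    _ = P * Q * ((b * a) * Q⁻¹) * P⁻¹ * c⁻¹ := by group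
    _ = P * Q * (Q⁻¹ * (b * a)) * P⁻¹ * c⁻¹ := by rw [hba Q⁻¹]
    _ = P * ((b * a) * P⁻¹) * c⁻¹ := by group
    _ = P * (P⁻¹ * (b * a)) * c⁻¹ := by rw [hba P⁻¹]
    _ = b * (a * c⁻¹) := by group
    _ = b * (c⁻¹ * a) := by rw [← hc' a]
    _ = b * c⁻¹ * a := by group
end helpers

/-- For a central extension `0 → A → B →π C → 1` of topological `G`-modules with a
continuous section `s` of `π`, a continuous derivation `γ : G → C` has `[δ¹(γ)] = 0`
in `H²(G,A)` (i.e. `δ¹(γ)` is the coboundary of a continuous `A`-valued 1-cochain)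
iff `γ` lifts to a continuous derivation `β : G → B` with `π ∘ β = γ`.
Consequently `H¹(G,B) → H¹(G,C) →δ¹ H²(G,A)` is exact. -/
theorem delta_one_kernel {G B C : Type*}
    [Group G] [TopologicalSpace G] [IsTopologicalGroup G]
    [Group B] [TopologicalSpace B] [IsTopologicalGroup B] [MulDistribMulAction G B]
    [ContinuousSMul G B]
    [Group C] [TopologicalSpace C] [IsTopologicalGroup C] [MulDistribMulAction G C]
    [ContinuousSMul G C]
    (π : B →* C) (hπc : Continuous π) (hπeq : ∀ (g : G) (b : B), π (g • b) = g • π b)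
    (hπsurj : Function.Surjective π)
    (hcentral : ∀ b : B, π b = 1 → ∀ x : B, b * x = x * b)
    (s : C → B) (hsc : Continuous s) (hs : ∀ c : C, π (s c) = c)
    (γ : G → C) (hγ : IsContDeriv γ) :
    ((∃ z : G → B, Continuous z ∧ (∀ g : G, π (z g) = 1) ∧
        ∀ g h : G, delta1 s γ g h = g • z h * (z (g * h))⁻¹ * z g) ↔
      ∃ β : G → B, IsContDeriv β ∧ ∀ g : G, π (β g) = γ g) ∧
    ((∃ z : G → B, Continuous z ∧ (∀ g : G, π (z g) = 1) ∧
        ∀ g h : G, delta1 s γ g h = g • z h * (z (g * h))⁻¹ * z g) ↔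
      ∃ β : G → B, IsContDeriv β ∧ Cohom (fun g => π (β g)) γ) := by
  obtain ⟨hγc, hγd⟩ := hγ
  -- the first equivalence
  have h1 : (∃ z : G → B, Continuous z ∧ (∀ g : G, π (z g) = 1) ∧
        ∀ g h : G, delta1 s γ g h = g • z h * (z (g * h))⁻¹ * z g) ↔
      ∃ β : G → B, IsContDeriv β ∧ ∀ g : G, π (β g) = γ g := by
    constructor
    · rintro ⟨z, hzc, hz1, hzeq⟩
      refine ⟨fun g => (z g)⁻¹ * s (γ g), ⟨hzc.inv.mul (hsc.comp hγc), ?_⟩, fun g => by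
        simp [map_mul, map_inv, hz1 g, hs]⟩
      intro g h
      have hsmul1 : π (g • z h) = 1 := by rw [hπeq, hz1, smul_one]
      have hz1' : π (z (g * h)) = 1 := hz1 _
      have key := central_calc (z g) (g • z h) (z (g * h))
        (s (γ g)) (g • s (γ h)) (s (γ (g * h)))
        (hcentral _ (hz1 g)) (hcentral _ hsmul1) (hcentral _ hz1')
        (by simpa [delta1] using hzeq g h)
      rw [smul_mul', smul_inv']
      exact key
    · rintro ⟨β, ⟨hβc, hβd⟩, hβπ⟩
      refine ⟨fun g => (β g)⁻¹ * s (γ g), hβc.inv.mul (hsc.comp hγc), fun g => by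
        simp [map_mul, map_inv, hβπ g, hs], ?_⟩
      intro g h
      have hz1 : ∀ g : G, π ((β g)⁻¹ * s (γ g)) = 1 := fun g => by
        simp [map_mul, map_inv, hβπ g, hs]
      have hsmul1 : π (g • ((β h)⁻¹ * s (γ h))) = 1 := by rw [hπeq, hz1, smul_one]
      have key := central_calc2 ((β g)⁻¹ * s (γ g)) (g • ((β h)⁻¹ * s (γ h)))
        ((β (g * h))⁻¹ * s (γ (g * h))) (β g) (g • β h)
        (hcentral _ (hz1 g)) (hcentral _ hsmul1) (hcentral _ (hz1 _))
      simp only [delta1, smul_mul', smul_inv', hβd g h, mul_inv_cancel_left] at key ⊢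
      exact key
  refine ⟨h1, h1.trans ⟨?_, ?_⟩⟩
  · rintro ⟨β, hβ, hβπ⟩
    exact ⟨β, hβ, 1, fun g => by simp [hβπ g]⟩
  · rintro ⟨β, ⟨hβc, hβd⟩, a, ha⟩
    refine ⟨fun g => (s a)⁻¹ * β g * g • s a, ⟨?_, ?_⟩, ?_⟩
    · exact (continuous_const.mul hβc).mul (continuous_id.smul continuous_const)
    · intro g h
      show (s a)⁻¹ * β (g * h) * (g * h) • s a =
        ((s a)⁻¹ * β g * g • s a) * g • ((s a)⁻¹ * β h * h • s a)
      rw [hβd g h]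
      simp only [smul_mul', smul_inv', mul_smul]
      group
    · intro g
      rw [ha g]
      simp [map_mul, map_inv, hs, hπeq]
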